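/- There exist a constant c > 0 and an integer M such that for every integer m ≥ M and every integer n with 1 ≤ n ≤ c · log m, the binomial coefficient C(m+n, n) admits a Grimm factorization. (In particular, the largest n for which C(m+n, n) admits a Grimm factorization satisfies w(m) ≫ log m.) -/

import Mathlib

open Finset

namespace GrimmAux

lemma fact_factorization (q k : ℕ) :
    (Nat.factorial k).factorization q = ∑ j ∈ Icc 1 k, (Nat.factorization j) q := by
  induction k with
  | zero => simp
  | succ k ih =>
      rw [Nat.factorial_succ,
        Nat.factorization_mul (Nat.succ_ne_zero k) (Nat.factorial_ne_zero k),
        Finset.sum_Icc_succ_top (by omega : 1 ≤ k + 1)]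
      simp [ih, Finsupp.add_apply]
      omega

lemma factorial_add_eq (m n : ℕ) :
    Nat.factorial (m + n) = Nat.factorial m * ∏ i ∈ Icc 1 n, (m + i) := by
  induction n with
  | zero => simp
  | succ n ih =>
      rw [Finset.prod_Icc_succ_top (by omega : 1 ≤ n + 1), ← Nat.add_assoc,
        Nat.factorial_succ, ih]
      ring

lemma choose_factorization_eq (m n q : ℕ) :
    ((m + n).choose n).factorization q + (Nat.factorial n).factorization q
      = ∑ i ∈ Icc 1 n, (m + i).factorization q := by
  have h := Nat.choose_mul_factorial_mul_factorial (Nat.le_add_left n m)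
  rw [Nat.add_sub_cancel] at h
  have hc : (m + n).choose n ≠ 0 := (Nat.choose_pos (Nat.le_add_left n m)).ne'
  have hprodne : (∏ i ∈ Icc 1 n, (m + i)) ≠ 0 :=
    Finset.prod_ne_zero_iff.mpr fun i hi => by
      have := (Finset.mem_Icc.mp hi).1; omega
  have h1 : ((m + n).choose n * Nat.factorial n * Nat.factorial m).factorization q
      = ((m + n).choose n).factorization q + (Nat.factorial n).factorization q
        + (Nat.factorial m).factorization q := by
    rw [Nat.factorization_mul (mul_ne_zero hc (Nat.factorial_ne_zero n)) (Nat.factorial_ne_zero m),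
      Nat.factorization_mul hc (Nat.factorial_ne_zero n)]
    simp [Finsupp.add_apply]
  have h2 : (Nat.factorial (m + n)).factorization q
      = (Nat.factorial m).factorization q + ∑ i ∈ Icc 1 n, (m + i).factorization q := by
    rw [factorial_add_eq m n,
      Nat.factorization_mul (Nat.factorial_ne_zero m) hprodne,
      Nat.factorization_prod (fun i hi => by
        have := (Finset.mem_Icc.mp hi).1; omega)]
    simp [Finsupp.add_apply, Finset.sum_apply']
  have := congrArg (fun x => x.factorization q) h
  simp only [h1, h2] at this
  omega

lemma val_add {q a d : ℕ} (hq : q.Prime) (ha : 0 < a) (hd : 0 < d)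
    (h : d.factorization q < a.factorization q) :
    (a + d).factorization q = d.factorization q := by
  have had : a + d ≠ 0 := by omega
  refine le_antisymm ?_ ?_
  · by_contra hlt
    push_neg at hlt
    have h1 : q ^ (d.factorization q + 1) ∣ a + d :=
      (hq.pow_dvd_iff_le_factorization had).mpr hlt
    have h2 : q ^ (d.factorization q + 1) ∣ a :=
      (hq.pow_dvd_iff_le_factorization ha.ne').mpr h
    have h3 : q ^ (d.factorization q + 1) ∣ d := by
      have h4 := Nat.dvd_sub h1 h2
      simpa using h4
    have := (hq.pow_dvd_iff_le_factorization hd.ne').mp h3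
    omega
  · refine (hq.pow_dvd_iff_le_factorization had).mp (Nat.dvd_add ?_ (Nat.ordProj_dvd d q))
    exact (hq.pow_dvd_iff_le_factorization ha.ne').mpr h.le

lemma val_sub {q a d : ℕ} (hq : q.Prime) (hd : 0 < d) (hda : d < a)
    (h : d.factorization q < a.factorization q) :
    (a - d).factorization q = d.factorization q := by
  have had : a - d ≠ 0 := by omega
  refine le_antisymm ?_ ?_
  · by_contra hlt
    push_neg at hlt
    have h1 : q ^ (d.factorization q + 1) ∣ a - d :=
      (hq.pow_dvd_iff_le_factorization had).mpr hlt
    have h2 : q ^ (d.factorization q + 1) ∣ a :=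
      (hq.pow_dvd_iff_le_factorization (by omega : a ≠ 0)).mpr h
    have h3 : q ^ (d.factorization q + 1) ∣ d := by
      have h4 := Nat.dvd_sub h2 h1
      have h5 : a - (a - d) = d := by omega
      rwa [h5] at h4
    have := (hq.pow_dvd_iff_le_factorization hd.ne').mp h3
    omega
  · refine (hq.pow_dvd_iff_le_factorization had).mp
      (Nat.dvd_sub ?_ (Nat.ordProj_dvd d q))
    exact (hq.pow_dvd_iff_le_factorization (by omega : a ≠ 0)).mpr h.le

lemma sum_erase_split {n i0 : ℕ} (h1 : 1 ≤ i0) (h2 : i0 ≤ n) (f : ℕ → ℕ) :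
    ∑ j ∈ (Icc 1 n).erase i0, f j
      = (∑ d ∈ Icc 1 (i0 - 1), f (i0 - d)) + ∑ d ∈ Icc 1 (n - i0), f (i0 + d) := by
  have hset : (Icc 1 n).erase i0 = Icc 1 (i0 - 1) ∪ Icc (i0 + 1) n := by
    ext j
    simp only [mem_erase, mem_Icc, mem_union]
    omega
  have hdisj : Disjoint (Icc 1 (i0 - 1)) (Icc (i0 + 1) n) := by
    rw [Finset.disjoint_left]
    intro j hj hj'
    simp only [mem_Icc] at hj hj'
    omega
  rw [hset, Finset.sum_union hdisj]
  congr 1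
  · refine Finset.sum_nbij' (fun d => i0 - d) (fun d => i0 - d) ?_ ?_ ?_ ?_ ?_
    · intro a ha; (try dsimp only); simp only [mem_Icc] at *; omega
    · intro a ha; (try dsimp only); simp only [mem_Icc] at *; omega
    · intro a ha; (try dsimp only); simp only [mem_Icc] at ha ⊢; omega
    · intro a ha; (try dsimp only); simp only [mem_Icc] at ha ⊢; omega
    · intro a ha; (try dsimp only); simp only [mem_Icc] at ha; congr 1; omega
  · refine Finset.sum_nbij' (fun j => j - i0) (fun d => i0 + d) ?_ ?_ ?_ ?_ ?_
    · intro a ha; (try dsimp only); simp only [mem_Icc] at *; omega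
    · intro a ha; (try dsimp only); simp only [mem_Icc] at *; omega
    · intro a ha; (try dsimp only); simp only [mem_Icc] at ha ⊢; omega
    · intro a ha; (try dsimp only); simp only [mem_Icc] at ha ⊢; omega
    · intro a ha; (try dsimp only); simp only [mem_Icc] at ha; congr 1; omega

lemma K_identity {n i0 : ℕ} (h1 : 1 ≤ i0) (h2 : i0 ≤ n) :
    (i0 * n.choose i0) * (Nat.factorial (i0 - 1) * Nat.factorial (n - i0))
      = Nat.factorial n := by
  have h := Nat.choose_mul_factorial_mul_factorial h2
  have hf : i0 * Nat.factorial (i0 - 1) = Nat.factorial i0 :=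
    Nat.mul_factorial_pred (by omega)
  calc (i0 * n.choose i0) * (Nat.factorial (i0 - 1) * Nat.factorial (n - i0))
      = n.choose i0 * (i0 * Nat.factorial (i0 - 1)) * Nat.factorial (n - i0) := by ring
    _ = Nat.factorial n := by rw [hf, h]

lemma K_ne_zero {n i0 : ℕ} (h1 : 1 ≤ i0) (h2 : i0 ≤ n) : i0 * n.choose i0 ≠ 0 :=
  Nat.mul_ne_zero (by omega) (Nat.choose_pos h2).ne'

lemma K_factorization {n i0 q : ℕ} (h1 : 1 ≤ i0) (h2 : i0 ≤ n) :
    (i0 * n.choose i0).factorization q + (Nat.factorial (i0 - 1)).factorization q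
      + (Nat.factorial (n - i0)).factorization q = (Nat.factorial n).factorization q := by
  have h : ((i0 * n.choose i0) * (Nat.factorial (i0 - 1) * Nat.factorial (n - i0))).factorization q
      = (Nat.factorial n).factorization q := by rw [K_identity h1 h2]
  rwa [Nat.factorization_mul (K_ne_zero h1 h2)
      (Nat.mul_ne_zero (Nat.factorial_ne_zero _) (Nat.factorial_ne_zero _)),
    Nat.factorization_mul (Nat.factorial_ne_zero _) (Nat.factorial_ne_zero _),
    Finsupp.add_apply, Finsupp.add_apply, ← add_assoc] at h

/-- Key equality: if `q^(v_q(m+i0)) > n` then `i0` strictly dominates and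
`v_q(C(m+n,n)) + v_q(i0 * C(n,i0)) = v_q(m+i0)`. -/
lemma key_eq {m n i0 q : ℕ} (hq : q.Prime) (hm : 0 < m) (h1 : 1 ≤ i0) (h2 : i0 ≤ n)
    (hbig : n < q ^ ((m + i0).factorization q)) :
    ((m + n).choose n).factorization q + (i0 * n.choose i0).factorization q
        = (m + i0).factorization q
    ∧ ∀ j, 1 ≤ j → j ≤ n → j ≠ i0 →
        (m + j).factorization q < (m + i0).factorization q := by
  have hdlt : ∀ d : ℕ, 1 ≤ d → d ≤ n → d.factorization q < (m + i0).factorization q := by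
    intro d hd1 hd2
    by_contra hge
    push_neg at hge
    have h3 : q ^ ((m + i0).factorization q) ≤ q ^ (d.factorization q) :=
      Nat.pow_le_pow_right hq.pos hge
    have := Nat.ordProj_le q (by omega : d ≠ 0)
    omega
  have hvalL : ∀ d, 1 ≤ d → d ≤ i0 - 1 →
      (m + (i0 - d)).factorization q = d.factorization q := by
    intro d hd1 hd2
    have heq : m + (i0 - d) = (m + i0) - d := by omega
    rw [heq]
    exact val_sub hq (by omega) (by omega) (hdlt _ (by omega) (by omega))
  have hvalR : ∀ d, 1 ≤ d → d ≤ n - i0 →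
      (m + (i0 + d)).factorization q = d.factorization q := by
    intro d hd1 hd2
    have heq : m + (i0 + d) = (m + i0) + d := by omega
    rw [heq]
    exact val_add hq (by omega) (by omega) (hdlt _ (by omega) (by omega))
  have hbig' : ∀ j, 1 ≤ j → j ≤ n → j ≠ i0 →
      (m + j).factorization q < (m + i0).factorization q := by
    intro j hj1 hj2 hji
    by_cases hlt : j < i0
    · have heq : j = i0 - (i0 - j) := by omega
      rw [heq, hvalL (i0 - j) (by omega) (by omega)]
      exact hdlt _ (by omega) (by omega)
    · have heq : j = i0 + (j - i0) := by omega
      rw [heq, hvalR (j - i0) (by omega) (by omega)]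
      exact hdlt _ (by omega) (by omega)
  refine ⟨?_, hbig'⟩
  have hsum := choose_factorization_eq m n q
  have hmem : i0 ∈ Icc 1 n := by simp [mem_Icc]; omega
  rw [← Finset.add_sum_erase _ _ hmem, sum_erase_split h1 h2] at hsum
  have hL : ∑ d ∈ Icc 1 (i0 - 1), (m + (i0 - d)).factorization q
      = (Nat.factorial (i0 - 1)).factorization q := by
    rw [fact_factorization]
    refine Finset.sum_congr rfl fun d hd => ?_
    simp only [mem_Icc] at hd
    exact hvalL d hd.1 hd.2
  have hR : ∑ d ∈ Icc 1 (n - i0), (m + (i0 + d)).factorization q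
      = (Nat.factorial (n - i0)).factorization q := by
    rw [fact_factorization]
    refine Finset.sum_congr rfl fun d hd => ?_
    simp only [mem_Icc] at hd
    exact hvalR d hd.1 hd.2
  rw [hL, hR] at hsum
  have hK := K_factorization (q := q) h1 h2
  omega

/-- For every prime `q`, `v_q(C(m+n,n)) ≤ v_q(m+i0)` for some `i0 ∈ [1,n]`. -/
lemma exists_le_max {m n q : ℕ} (hq : q.Prime) (hm : 0 < m) (hn : 1 ≤ n) :
    ∃ i0, 1 ≤ i0 ∧ i0 ≤ n ∧
      ((m + n).choose n).factorization q ≤ (m + i0).factorization q := by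
  obtain ⟨i0, hi0mem, hmax⟩ := Finset.exists_max_image (Icc 1 n)
    (fun j => (m + j).factorization q) ⟨1, by simp [mem_Icc]; omega⟩
  simp only [mem_Icc] at hi0mem
  obtain ⟨h1, h2⟩ := hi0mem
  refine ⟨i0, h1, h2, ?_⟩
  have hub : ∀ j, 1 ≤ j → j ≤ n → ∀ d, 1 ≤ d → m + i0 = m + j + d ∨ m + j = m + i0 + d →
      (m + j).factorization q ≤ d.factorization q := by
    intro j hj1 hj2 d hd1 hcase
    have hle : (m + j).factorization q ≤ (m + i0).factorization q :=
      hmax j (by simp [mem_Icc]; omega)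
    have hd1' : q ^ ((m + j).factorization q) ∣ (m + j) := Nat.ordProj_dvd _ _
    have hd2' : q ^ ((m + j).factorization q) ∣ (m + i0) :=
      (hq.pow_dvd_iff_le_factorization (by omega)).mpr hle
    have hdd : q ^ ((m + j).factorization q) ∣ d := by
      rcases hcase with hc | hc
      · have h5 := Nat.dvd_sub hd2' hd1'
        have heq : (m + i0) - (m + j) = d := by omega
        rwa [heq] at h5
      · have h5 := Nat.dvd_sub hd1' hd2'
        have heq : (m + j) - (m + i0) = d := by omega
        rwa [heq] at h5
    exact (hq.pow_dvd_iff_le_factorization (by omega)).mp hdd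
  have hsum := choose_factorization_eq m n q
  have hmem : i0 ∈ Icc 1 n := by simp [mem_Icc]; omega
  rw [← Finset.add_sum_erase _ _ hmem, sum_erase_split h1 h2] at hsum
  have hL : ∑ d ∈ Icc 1 (i0 - 1), (m + (i0 - d)).factorization q
      ≤ (Nat.factorial (i0 - 1)).factorization q := by
    rw [fact_factorization]
    refine Finset.sum_le_sum fun d hd => ?_
    simp only [mem_Icc] at hd
    exact hub (i0 - d) (by omega) (by omega) d (by omega) (Or.inl (by omega))
  have hR : ∑ d ∈ Icc 1 (n - i0), (m + (i0 + d)).factorization q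
      ≤ (Nat.factorial (n - i0)).factorization q := by
    rw [fact_factorization]
    refine Finset.sum_le_sum fun d hd => ?_
    simp only [mem_Icc] at hd
    exact hub (i0 + d) (by omega) (by omega) d (by omega) (Or.inr (by omega))
  have hK := K_factorization (q := q) h1 h2
  omega

lemma log8_bound : Real.log 4 + Real.log 2 ≤ 2.1 := by
  have h2 := Real.log_two_lt_d9
  have h4 : Real.log 4 = 2 * Real.log 2 := by
    rw [show (4:ℝ) = 2 ^ 2 by norm_num, Real.log_pow]
    push_cast; ring
  rw [h4]; nlinarith

/-- Existence of a "good" prime for each index. -/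
lemma exists_good_prime {m n i0 : ℕ} (h1 : 1 ≤ i0) (h2 : i0 ≤ n)
    (hlog : 8 * (n : ℝ) ≤ Real.log m) :
    ∃ q : ℕ, q.Prime ∧ n < q ^ ((m + i0).factorization q) ∧
      (i0 * n.choose i0).factorization q < (m + i0).factorization q := by
  have hn1 : 1 ≤ n := le_trans h1 h2
  have hlog8 : (8 : ℝ) ≤ Real.log m := by
    have : (1:ℝ) ≤ (n:ℝ) := by exact_mod_cast hn1
    nlinarith
  have hm2 : 2 ≤ m := by
    by_contra hm
    push_neg at hm
    interval_cases m <;> simp [Real.log_zero, Real.log_one] at hlog8 <;> norm_num at hlog8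
  by_contra hno
  push_neg at hno
  set N := m + i0 with hNdef
  set K := i0 * n.choose i0 with hKdef
  have hN0 : N ≠ 0 := by omega
  have hK0 : K ≠ 0 := K_ne_zero h1 h2
  -- product formula
  have hNprod : ∏ p ∈ N.primeFactors, p ^ N.factorization p = N := by
    rw [← Nat.support_factorization]
    exact Nat.factorization_prod_pow_eq_self hN0
  -- the three pieces
  set S1 := N.primeFactors.filter (fun p => p ^ N.factorization p ≤ n) with hS1
  set S2 := N.primeFactors.filter (fun p => ¬ p ^ N.factorization p ≤ n) with hS2
  have hsplit : (∏ p ∈ S1, p ^ N.factorization p) * (∏ p ∈ S2, p ^ N.factorization p) = N := by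
    rw [hS1, hS2, Finset.prod_filter_mul_prod_filter_not]
    exact hNprod
  -- S2 bound
  have hS2K : ∏ p ∈ S2, p ^ N.factorization p ≤ K := by
    have hd1 : ∏ p ∈ S2, p ^ N.factorization p ∣ ∏ p ∈ S2, p ^ K.factorization p := by
      refine Finset.prod_dvd_prod_of_dvd _ _ fun p hp => ?_
      rw [hS2, Finset.mem_filter] at hp
      obtain ⟨hpf, hple⟩ := hp
      have hprime := Nat.prime_of_mem_primeFactors hpf
      exact pow_dvd_pow p (hno p hprime (by omega))
    have hsub : S2 ⊆ K.primeFactors := by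
      intro p hp
      rw [hS2, Finset.mem_filter] at hp
      obtain ⟨hpf, hple⟩ := hp
      have hprime := Nat.prime_of_mem_primeFactors hpf
      have hvN : 1 ≤ N.factorization p :=
        (Nat.Prime.factorization_pos_of_dvd hprime hN0
          (Nat.dvd_of_mem_primeFactors hpf))
      have hvK : 1 ≤ K.factorization p := le_trans hvN (hno p hprime (by omega))
      exact Nat.mem_primeFactors.mpr
        ⟨hprime, Nat.dvd_of_factorization_pos (by omega), hK0⟩
    have hd2 : ∏ p ∈ S2, p ^ K.factorization p ∣ K := by
      have := Finset.prod_dvd_prod_of_subset S2 K.primeFactors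
        (fun p => p ^ K.factorization p) hsub
      refine dvd_trans this ?_
      rw [← Nat.support_factorization]
      exact dvd_of_eq (Nat.factorization_prod_pow_eq_self hK0)
    exact Nat.le_of_dvd (Nat.pos_of_ne_zero hK0) (dvd_trans hd1 hd2)
  -- S1 split
  set S1a := S1.filter (fun p => p * p ≤ n) with hS1a
  set S1b := S1.filter (fun p => ¬ p * p ≤ n) with hS1b
  have hsplit1 : (∏ p ∈ S1a, p ^ N.factorization p) * (∏ p ∈ S1b, p ^ N.factorization p)
      = ∏ p ∈ S1, p ^ N.factorization p := by
    rw [hS1a, hS1b, Finset.prod_filter_mul_prod_filter_not]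
  have hS1abound : ∏ p ∈ S1a, p ^ N.factorization p ≤ n ^ Nat.sqrt n := by
    have hb : ∏ p ∈ S1a, p ^ N.factorization p ≤ n ^ S1a.card := by
      refine Finset.prod_le_pow_card _ _ _ fun p hp => ?_
      rw [hS1a, Finset.mem_filter, hS1, Finset.mem_filter] at hp
      exact hp.1.2
    refine le_trans hb (Nat.pow_le_pow_right (by omega) ?_)
    have hsub : S1a ⊆ Finset.Icc 2 (Nat.sqrt n) := by
      intro p hp
      rw [hS1a, Finset.mem_filter, hS1, Finset.mem_filter] at hp
      have hprime := Nat.prime_of_mem_primeFactors hp.1.1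
      rw [Finset.mem_Icc]
      exact ⟨hprime.two_le, Nat.le_sqrt.mpr hp.2⟩
    calc S1a.card ≤ (Finset.Icc 2 (Nat.sqrt n)).card := Finset.card_le_card hsub
      _ = Nat.sqrt n + 1 - 2 := by rw [Nat.card_Icc]
      _ ≤ Nat.sqrt n := by omega
  have hS1bbound : ∏ p ∈ S1b, p ^ N.factorization p ≤ 4 ^ n := by
    have heq : ∏ p ∈ S1b, p ^ N.factorization p = ∏ p ∈ S1b, p := by
      refine Finset.prod_congr rfl fun p hp => ?_
      rw [hS1b, Finset.mem_filter, hS1, Finset.mem_filter] at hp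
      obtain ⟨⟨hpf, hple⟩, hpp⟩ := hp
      have hprime := Nat.prime_of_mem_primeFactors hpf
      have hv1 : 1 ≤ N.factorization p :=
        Nat.Prime.factorization_pos_of_dvd hprime hN0 (Nat.dvd_of_mem_primeFactors hpf)
      have hv2 : N.factorization p < 2 := by
        by_contra hv
        push_neg at hv
        have : p * p ≤ p ^ N.factorization p := by
          calc p * p = p ^ 2 := by ring
            _ ≤ p ^ N.factorization p := Nat.pow_le_pow_right hprime.pos hv
        omega
      have : N.factorization p = 1 := by omega
      rw [this, pow_one]
    rw [heq]
    have hsub : S1b ⊆ Finset.filter (fun p => p.Prime) (Finset.range (n + 1)) := by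
      intro p hp
      rw [hS1b, Finset.mem_filter, hS1, Finset.mem_filter] at hp
      obtain ⟨⟨hpf, hple⟩, hpp⟩ := hp
      have hprime := Nat.prime_of_mem_primeFactors hpf
      have hv1 : 1 ≤ N.factorization p :=
        Nat.Prime.factorization_pos_of_dvd hprime hN0 (Nat.dvd_of_mem_primeFactors hpf)
      have hpn : p ≤ n := by
        calc p = p ^ 1 := (pow_one p).symm
          _ ≤ p ^ N.factorization p := Nat.pow_le_pow_right hprime.pos hv1
          _ ≤ n := hple
      simp [Finset.mem_filter, Finset.mem_range]
      exact ⟨by omega, hprime⟩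
    have hdvd : ∏ p ∈ S1b, p ∣ primorial n := by
      refine Finset.prod_dvd_prod_of_subset S1b _ (fun p => p) ?_
      simpa [primorial] using hsub
    have hpos : 0 < primorial n := by
      unfold primorial
      exact Finset.prod_pos fun p hp => (Finset.mem_filter.mp hp).2.pos
    exact le_trans (Nat.le_of_dvd hpos hdvd) (primorial_le_4_pow n)
  -- K bound
  have hKbound : K ≤ n * 2 ^ n := by
    have hc : n.choose i0 ≤ 2 ^ n := by
      have hs := Nat.sum_range_choose n
      have hmem : i0 ∈ Finset.range (n + 1) := Finset.mem_range.mpr (by omega)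
      calc n.choose i0 ≤ ∑ k ∈ Finset.range (n + 1), n.choose k :=
            Finset.single_le_sum (fun k _ => Nat.zero_le _) hmem
        _ = 2 ^ n := hs
    exact Nat.mul_le_mul h2 hc
  -- total numeric bound
  have htotal : m < n ^ Nat.sqrt n * 4 ^ n * (n * 2 ^ n) := by
    have : N ≤ n ^ Nat.sqrt n * 4 ^ n * (n * 2 ^ n) := by
      calc N = (∏ p ∈ S1a, p ^ N.factorization p) * (∏ p ∈ S1b, p ^ N.factorization p)
            * (∏ p ∈ S2, p ^ N.factorization p) := by rw [hsplit1, hsplit]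
        _ ≤ n ^ Nat.sqrt n * 4 ^ n * (n * 2 ^ n) := by
            have := Nat.mul_le_mul (Nat.mul_le_mul hS1abound hS1bbound) (le_trans hS2K hKbound)
            exact this
    omega
  -- real analysis
  set s : ℕ := Nat.sqrt n with hs
  have hnR : (1:ℝ) ≤ (n:ℝ) := by exact_mod_cast hn1
  have hsqrt_pos : (0:ℝ) < Real.sqrt n := Real.sqrt_pos.mpr (by linarith)
  have hsR : (s:ℝ) ≤ Real.sqrt n := by
    rw [show Real.sqrt (n:ℝ) = Real.sqrt (n:ℝ) from rfl]
    refine (Real.le_sqrt (by positivity) (by linarith)).mpr ?_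
    have := Nat.sqrt_le n
    calc ((s:ℝ)) ^ 2 = ((s * s : ℕ) : ℝ) := by push_cast; ring
      _ ≤ (n:ℝ) := by exact_mod_cast this
  have hlogn : Real.log n ≤ 2 * (Real.sqrt n - 1) := by
    have h1' : Real.log n = 2 * Real.log (Real.sqrt n) := by
      rw [Real.log_sqrt (by linarith)]; ring
    have h2' : Real.log (Real.sqrt n) ≤ Real.sqrt n - 1 :=
      Real.log_le_sub_one_of_pos hsqrt_pos
    linarith
  have hlogn0 : 0 ≤ Real.log n := Real.log_nonneg hnR
  have hsqn : Real.sqrt n * Real.sqrt n = (n:ℝ) := Real.mul_self_sqrt (by linarith)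
  have hlogB : Real.log ((n ^ s * 4 ^ n * (n * 2 ^ n) : ℕ) : ℝ) < 8 * n := by
    have hcast : ((n ^ s * 4 ^ n * (n * 2 ^ n) : ℕ) : ℝ)
        = (n:ℝ) ^ s * 4 ^ n * ((n:ℝ) * 2 ^ n) := by push_cast; ring
    rw [hcast]
    have hne1 : ((n:ℝ) ^ s * 4 ^ n) ≠ 0 := by positivity
    have hne2 : ((n:ℝ) * 2 ^ n) ≠ 0 := by positivity
    rw [Real.log_mul hne1 hne2, Real.log_mul (by positivity) (by positivity),
      Real.log_mul (by positivity) (by positivity), Real.log_pow, Real.log_pow, Real.log_pow]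
    have hterm1 : (s:ℝ) * Real.log n ≤ Real.sqrt n * (2 * (Real.sqrt n - 1)) := by
      refine mul_le_mul hsR hlogn hlogn0 (by positivity)
    have hterm1' : Real.sqrt n * (2 * (Real.sqrt n - 1)) = 2 * n - 2 * Real.sqrt n := by
      nlinarith [hsqn]
    have hl2 : Real.log 2 < 0.6931471808 := Real.log_two_lt_d9
    have hl4 : Real.log 4 = 2 * Real.log 2 := by
      rw [show (4:ℝ) = 2 ^ 2 by norm_num, Real.log_pow]; push_cast; ring
    have hsqrt1 : (1:ℝ) ≤ Real.sqrt n := by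
      rw [show (1:ℝ) = Real.sqrt 1 by simp]
      exact Real.sqrt_le_sqrt (by linarith)
    nlinarith [hnR, hsqrt1]
  have hmlt : Real.log m < 8 * n := by
    have hle : (m:ℝ) ≤ ((n ^ s * 4 ^ n * (n * 2 ^ n) : ℕ) : ℝ) := by
      exact_mod_cast le_of_lt htotal
    calc Real.log m ≤ Real.log ((n ^ s * 4 ^ n * (n * 2 ^ n) : ℕ) : ℝ) :=
          Real.log_le_log (by positivity) hle
      _ < 8 * n := hlogB
  linarith

lemma prod_pow_dvd {s : Finset ℕ} {f : ℕ → ℕ} {N : ℕ}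
    (hp : ∀ p ∈ s, p.Prime) (hd : ∀ p ∈ s, p ^ f p ∣ N) :
    (∏ p ∈ s, p ^ f p) ∣ N := by
  induction s using Finset.induction_on with
  | empty => simp
  | insert a t hx ih =>
      rw [Finset.prod_insert hx]
      have hap : a.Prime := hp a (Finset.mem_insert_self a t)
      have hcop : Nat.Coprime (a ^ f a) (∏ p ∈ t, p ^ f p) := by
        refine Nat.Coprime.prod_right fun q hq => ?_
        have hqp : q.Prime := hp q (Finset.mem_insert_of_mem hq)
        have hne : a ≠ q := fun h => hx (h ▸ hq)
        exact Nat.Coprime.pow _ _ ((Nat.coprime_primes hap hqp).mpr hne)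
      exact hcop.mul_dvd_of_dvd_of_dvd (hd a (Finset.mem_insert_self a t))
        (ih (fun p hp' => hp p (Finset.mem_insert_of_mem hp'))
          (fun p hp' => hd p (Finset.mem_insert_of_mem hp')))

end GrimmAux

open GrimmAux in
/-- Lower bound `w(m) ≫ log m`: there are `c > 0` and `M` such that for every
`m ≥ M` and every `1 ≤ n ≤ c · log m`, the binomial coefficient `C(m+n, n)`
admits a Grimm factorization. -/
theorem grimm_factorization_log_lower_bound :
    ∃ c : ℝ, 0 < c ∧ ∃ M : ℕ, ∀ m : ℕ, M ≤ m → ∀ n : ℕ, 1 ≤ n →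
      (n : ℝ) ≤ c * Real.log m →
      ∃ a : ℕ → ℕ,
        Nat.choose (m + n) n = ∏ i ∈ Finset.Icc 1 n, a i ∧
        (∀ i ∈ Finset.Icc 1 n, a i ∣ (m + i) ∧ 1 < a i) ∧
        (∀ i ∈ Finset.Icc 1 n, ∀ j ∈ Finset.Icc 1 n, i ≠ j →
          Nat.Coprime (a i) (a j)) := by
  classical
  refine ⟨1/8, by norm_num, 2, ?_⟩
  intro m hM n hn1 hlogc
  have hlog : 8 * (n : ℝ) ≤ Real.log m := by
    rw [one_div, inv_mul_eq_div, le_div_iff₀ (by norm_num : (0:ℝ) < 8)] at hlogc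
    linarith [hlogc]
  have hm0 : 0 < m := by omega
  set C := (m + n).choose n with hCdef
  have hC0 : C ≠ 0 := (Nat.choose_pos (Nat.le_add_left n m)).ne'
  -- good primes
  have hgood : ∀ i : ℕ, ∃ q : ℕ, 1 ≤ i → i ≤ n →
      q.Prime ∧ n < q ^ ((m + i).factorization q) ∧
        (i * n.choose i).factorization q < (m + i).factorization q := by
    intro i
    by_cases hi : 1 ≤ i ∧ i ≤ n
    · obtain ⟨q, hq⟩ := exists_good_prime hi.1 hi.2 hlog
      exact ⟨q, fun _ _ => hq⟩
    · exact ⟨2, fun ha hb => absurd ⟨ha, hb⟩ hi⟩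
  choose Q hQ using hgood
  have hQprime : ∀ i, 1 ≤ i → i ≤ n → (Q i).Prime := fun i a b => (hQ i a b).1
  have hkey : ∀ i, 1 ≤ i → i ≤ n →
      (C.factorization (Q i) + (i * n.choose i).factorization (Q i)
          = (m + i).factorization (Q i))
      ∧ ∀ j, 1 ≤ j → j ≤ n → j ≠ i →
          (m + j).factorization (Q i) < (m + i).factorization (Q i) :=
    fun i hi1 hi2 =>
      key_eq (hQprime i hi1 hi2) hm0 hi1 hi2 (hQ i hi1 hi2).2.1
  have hCpos : ∀ i, 1 ≤ i → i ≤ n → 1 ≤ C.factorization (Q i) := by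
    intro i hi1 hi2
    have h := (hkey i hi1 hi2).1
    have h2 := (hQ i hi1 hi2).2.2
    omega
  have hCle : ∀ i, 1 ≤ i → i ≤ n →
      C.factorization (Q i) ≤ (m + i).factorization (Q i) := by
    intro i hi1 hi2
    have h := (hkey i hi1 hi2).1
    omega
  have hinj : ∀ i, 1 ≤ i → i ≤ n → ∀ j, 1 ≤ j → j ≤ n → Q i = Q j → i = j := by
    intro i hi1 hi2 j hj1 hj2 hqe
    by_contra hne
    have ha := (hkey i hi1 hi2).2 j hj1 hj2 (fun h => hne h.symm)
    have hb := (hkey j hj1 hj2).2 i hi1 hi2 (fun h => hne h)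
    rw [hqe] at ha
    omega
  have hB : ∀ p : ℕ, ∃ i, 1 ≤ i ∧ i ≤ n ∧
      (p.Prime → C.factorization p ≤ (m + i).factorization p) := by
    intro p
    by_cases hp : p.Prime
    · obtain ⟨i0, a, b, c⟩ := exists_le_max hp hm0 hn1
      exact ⟨i0, a, b, fun _ => c⟩
    · exact ⟨1, le_refl 1, hn1, fun h => absurd h hp⟩
  choose β hβ1 hβ2 hβ3 using hB
  set σ : ℕ → ℕ := fun p =>
    if h : ∃ i, (1 ≤ i ∧ i ≤ n) ∧ Q i = p then h.choose else β p with hσdef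
  have hσQ : ∀ i, 1 ≤ i → i ≤ n → σ (Q i) = i := by
    intro i hi1 hi2
    have hex : ∃ j, (1 ≤ j ∧ j ≤ n) ∧ Q j = Q i := ⟨i, ⟨hi1, hi2⟩, rfl⟩
    rw [hσdef]
    dsimp only
    rw [dif_pos hex]
    obtain ⟨⟨hj1, hj2⟩, hje⟩ := hex.choose_spec
    exact hinj _ hj1 hj2 _ hi1 hi2 hje
  have hσmem : ∀ p, 1 ≤ σ p ∧ σ p ≤ n := by
    intro p
    rw [hσdef]
    dsimp only
    split
    · next h =>
        obtain ⟨⟨a, b⟩, _⟩ := h.choose_spec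
        exact ⟨a, b⟩
    · exact ⟨hβ1 p, hβ2 p⟩
  have hσdvd : ∀ p, p.Prime → C.factorization p ≤ (m + σ p).factorization p := by
    intro p hp
    rw [hσdef]
    dsimp only
    split
    · next h =>
        obtain ⟨⟨a, b⟩, hqe⟩ := h.choose_spec
        have := hCle h.choose a b
        rwa [hqe] at this
    · exact hβ3 p hp
  refine ⟨fun i => ∏ p ∈ C.primeFactors.filter (fun p => σ p = i),
      p ^ C.factorization p, ?_, ?_, ?_⟩
  · -- product over fibers
    have hmaps : ∀ p ∈ C.primeFactors, σ p ∈ Finset.Icc 1 n := by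
      intro p _
      simp only [Finset.mem_Icc]
      exact hσmem p
    have := Finset.prod_fiberwise_of_maps_to hmaps (fun p => p ^ C.factorization p)
    rw [this]
    rw [← Nat.support_factorization]
    exact (Nat.factorization_prod_pow_eq_self hC0).symm
  · intro i hi
    simp only [Finset.mem_Icc] at hi
    constructor
    · refine prod_pow_dvd ?_ ?_
      · intro p hp
        exact Nat.prime_of_mem_primeFactors (Finset.mem_filter.mp hp).1
      · intro p hp
        obtain ⟨hpf, hpσ⟩ := Finset.mem_filter.mp hp
        have hprime := Nat.prime_of_mem_primeFactors hpf
        have := hσdvd p hprime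
        rw [hpσ] at this
        exact (hprime.pow_dvd_iff_le_factorization (by omega)).mpr this
    · -- 1 < a i
      have hQmem : Q i ∈ C.primeFactors.filter (fun p => σ p = i) := by
        rw [Finset.mem_filter]
        constructor
        · rw [← Nat.support_factorization, Finsupp.mem_support_iff]
          have := hCpos i hi.1 hi.2
          omega
        · exact hσQ i hi.1 hi.2
      have hdvd : Q i ^ C.factorization (Q i)
          ∣ ∏ p ∈ C.primeFactors.filter (fun p => σ p = i), p ^ C.factorization p :=
        Finset.dvd_prod_of_mem _ hQmem
      have hpos : 0 < ∏ p ∈ C.primeFactors.filter (fun p => σ p = i),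
          p ^ C.factorization p := by
        refine Finset.prod_pos fun p hp => ?_
        exact pow_pos (Nat.prime_of_mem_primeFactors (Finset.mem_filter.mp hp).1).pos _
      have h1lt : 1 < Q i ^ C.factorization (Q i) :=
        Nat.one_lt_pow (by have := hCpos i hi.1 hi.2; omega)
          (hQprime i hi.1 hi.2).one_lt
      exact lt_of_lt_of_le h1lt (Nat.le_of_dvd hpos hdvd)
  · intro i hi j hj hij
    refine Nat.Coprime.prod_left fun p hp => ?_
    refine Nat.Coprime.prod_right fun r hr => ?_
    obtain ⟨hpf, hpσ⟩ := Finset.mem_filter.mp hp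
    obtain ⟨hrf, hrσ⟩ := Finset.mem_filter.mp hr
    have hne : p ≠ r := by
      rintro rfl
      exact hij (hpσ.symm.trans hrσ)
    exact Nat.Coprime.pow _ _ ((Nat.coprime_primes (Nat.prime_of_mem_primeFactors hpf)
      (Nat.prime_of_mem_primeFactors hrf)).mpr hne)
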